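/- arXiv:2510.11939 — 3 statements merged into one kernel-verified Lean document; each statement's English description precedes it below -/
import Mathlib

section
/- Let I ⊆ ℝ be an open interval and let λ, μ, r ∈ ℝ. Let B, C, ξ, h : I → ℝ be differentiable functions with h nonvanishing, and suppose that on all of I: (i) ξ = h'/h, (ii) ξ' = -ξ² + C - λ, and (iii) ξ² - B·ξ - C = -(r-1)·μ/h². Then B·ξ² + (B' + 2λ)·ξ + (C - λ)·B + C' = 0 on I. -/
/-- Let `I = (a, b) ⊆ ℝ` be an open interval and `λ, μ, r ∈ ℝ`.
Let `B, C, ξ, h : I → ℝ` be differentiable functions (with derivatives `B', C', ξ', h'`)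
with `h` nonvanishing, and suppose that on all of `I`:
(i) `ξ = h'/h`, (ii) `ξ' = -ξ² + C - λ`, and (iii) `ξ² - B·ξ - C = -(r-1)·μ/h²`.
Then `B·ξ² + (B' + 2λ)·ξ + (C - λ)·B + C' = 0` on `I`. -/
theorem stmt_2 (a b lam μ r : ℝ) (B B' C C' ξ ξ' h h' : ℝ → ℝ)
    (hBdiff : ∀ s ∈ Set.Ioo a b, HasDerivAt B (B' s) s)
    (hCdiff : ∀ s ∈ Set.Ioo a b, HasDerivAt C (C' s) s)
    (hξdiff : ∀ s ∈ Set.Ioo a b, HasDerivAt ξ (ξ' s) s)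
    (hhdiff : ∀ s ∈ Set.Ioo a b, HasDerivAt h (h' s) s)
    (hh : ∀ s ∈ Set.Ioo a b, h s ≠ 0)
    (e1 : ∀ s ∈ Set.Ioo a b, ξ s = h' s / h s)
    (e2 : ∀ s ∈ Set.Ioo a b, ξ' s = -(ξ s) ^ 2 + C s - lam)
    (e3 : ∀ s ∈ Set.Ioo a b,
      (ξ s) ^ 2 - B s * ξ s - C s = -(r - 1) * μ / (h s) ^ 2) :
    ∀ s ∈ Set.Ioo a b,
      B s * (ξ s) ^ 2 + (B' s + 2 * lam) * ξ s + (C s - lam) * B s + C' s = 0 := by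
  intro s hs
  have hhs := hh s hs
  have hL : HasDerivAt (fun t => (ξ t) ^ 2 - B t * ξ t - C t)
      (2 * ξ s ^ 1 * ξ' s - (B' s * ξ s + B s * ξ' s) - C' s) s :=
    (((hξdiff s hs).pow 2).sub ((hBdiff s hs).mul (hξdiff s hs))).sub (hCdiff s hs)
  have hR : HasDerivAt (fun t => -(r - 1) * μ / (h t) ^ 2)
      ((0 * h s ^ 2 - -(r - 1) * μ * (2 * h s ^ 1 * h' s)) / (h s ^ 2) ^ 2) s :=
    (hasDerivAt_const s (-(r - 1) * μ)).div ((hhdiff s hs).pow 2) (pow_ne_zero 2 hhs)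
  have hev : (fun t => (ξ t) ^ 2 - B t * ξ t - C t)
      =ᶠ[nhds s] (fun t => -(r - 1) * μ / (h t) ^ 2) := by
    filter_upwards [isOpen_Ioo.mem_nhds hs] with t ht using e3 t ht
  have hL2 : HasDerivAt (fun t => (ξ t) ^ 2 - B t * ξ t - C t)
      ((0 * h s ^ 2 - -(r - 1) * μ * (2 * h s ^ 1 * h' s)) / (h s ^ 2) ^ 2) s :=
    (hev.hasDerivAt_iff).mpr hR
  have key := hL.unique hL2
  have e1s := e1 s hs
  have e2s := e2 s hs
  have e3s := e3 s hs
  have hξh : h' s = ξ s * h s := by field_simp at e1s; linarith [e1s]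
  have hc : -(r - 1) * μ = ((ξ s) ^ 2 - B s * ξ s - C s) * (h s) ^ 2 := by
    field_simp at e3s; linarith [e3s]
  rw [hξh, hc, e2s] at key
  have h2 : (h s) ^ 2 ≠ 0 := pow_ne_zero 2 hhs
  field_simp at key
  have h4 : ((h s) ^ 2) ^ 2 ≠ 0 := pow_ne_zero 2 h2
  have key2 : (2 * ξ s * (-ξ s ^ 2 + C s - lam) - (B' s * ξ s + B s * (-ξ s ^ 2 + C s - lam))
      - C' s) = -((ξ s ^ 2 - B s * ξ s - C s) * (2 * ξ s)) :=
    mul_right_cancel₀ h4 (by linear_combination (h s ^ 2) * key)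
  linear_combination -key2
end

section
/- Let I ⊆ ℝ be an open interval, let n ≥ 2 be an integer, let c₀ ∈ ℝ, let k ≥ 1 and let r₁, …, r_k be positive reals with r₁ + ⋯ + r_k = n - 1. Let φ, ξ₁, …, ξ_k : I → ℝ be differentiable functions satisfying φ' = (n-1)c₀ and ξ_ℓ' = -ξ_ℓ² + c₀ on I for every ℓ ∈ {1,…,k}. Define R := -(n-1)c₀ - φ·Σ_{ℓ=1}^{k} r_ℓ ξ_ℓ and S := (n-1)²c₀² + φ²·Σ_{ℓ=1}^{k} r_ℓ ξ_ℓ². Then R is differentiable and S = (n-1)c₀·φ² - (n-1)c₀·R + φ·R' on I. -/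
/-- Let `I = (a, b) ⊆ ℝ` be an open interval, `n ≥ 2` an integer, `c₀ ∈ ℝ`, `k ≥ 1`,
and `r₁, …, r_k` positive reals with `r₁ + ⋯ + r_k = n - 1`.
Let `φ, ξ₁, …, ξ_k : I → ℝ` be differentiable functions satisfying `φ' = (n-1)c₀` and
`ξ_ℓ' = -ξ_ℓ² + c₀` on `I` for every `ℓ`.
Define `R := -(n-1)c₀ - φ·Σ_ℓ r_ℓ ξ_ℓ` and `S := (n-1)²c₀² + φ²·Σ_ℓ r_ℓ ξ_ℓ²`.
Then `R` is differentiable and `S = (n-1)c₀·φ² - (n-1)c₀·R + φ·R'` on `I`. -/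
theorem stmt_3 (a b : ℝ) (n : ℕ) (hn : 2 ≤ n) (c₀ : ℝ) (k : ℕ) (hk : 1 ≤ k)
    (r : Fin k → ℝ) (hr : ∀ ℓ, 0 < r ℓ) (hrsum : ∑ ℓ, r ℓ = (n : ℝ) - 1)
    (φ : ℝ → ℝ) (ξ : Fin k → ℝ → ℝ)
    (hφ : ∀ s ∈ Set.Ioo a b, HasDerivAt φ (((n : ℝ) - 1) * c₀) s)
    (hξ : ∀ ℓ, ∀ s ∈ Set.Ioo a b, HasDerivAt (ξ ℓ) (-(ξ ℓ s) ^ 2 + c₀) s)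
    (R S : ℝ → ℝ)
    (hR : ∀ s, R s = -((n : ℝ) - 1) * c₀ - φ s * ∑ ℓ, r ℓ * ξ ℓ s)
    (hS : ∀ s, S s = ((n : ℝ) - 1) ^ 2 * c₀ ^ 2 + (φ s) ^ 2 * ∑ ℓ, r ℓ * (ξ ℓ s) ^ 2) :
    ∀ s ∈ Set.Ioo a b, DifferentiableAt ℝ R s ∧
      S s = ((n : ℝ) - 1) * c₀ * (φ s) ^ 2 - ((n : ℝ) - 1) * c₀ * R s + φ s * deriv R s := by
  intro s hs
  have hRe : R = fun t => -((n : ℝ) - 1) * c₀ - φ t * ∑ ℓ, r ℓ * ξ ℓ t := funext hR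
  have hsum : HasDerivAt (fun t => ∑ ℓ, r ℓ * ξ ℓ t) (∑ ℓ, r ℓ * (-(ξ ℓ s) ^ 2 + c₀)) s :=
    HasDerivAt.fun_sum fun ℓ _ => (hξ ℓ s hs).const_mul _
  have hRD : HasDerivAt R
      (-((((n : ℝ) - 1) * c₀) * (∑ ℓ, r ℓ * ξ ℓ s)
        + φ s * ∑ ℓ, r ℓ * (-(ξ ℓ s) ^ 2 + c₀))) s := by
    rw [hRe]
    exact ((hφ s hs).mul hsum).const_sub (-((n : ℝ) - 1) * c₀)
  have hderiv : deriv R s = -((((n : ℝ) - 1) * c₀) * (∑ ℓ, r ℓ * ξ ℓ s)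
        + φ s * ∑ ℓ, r ℓ * (-(ξ ℓ s) ^ 2 + c₀)) := hRD.deriv
  refine ⟨hRD.differentiableAt, ?_⟩
  have hsplit : (∑ ℓ, r ℓ * (-(ξ ℓ s) ^ 2 + c₀))
      = -(∑ ℓ, r ℓ * (ξ ℓ s) ^ 2) + ((n : ℝ) - 1) * c₀ := by
    rw [← hrsum, Finset.sum_mul, ← Finset.sum_neg_distrib, ← Finset.sum_add_distrib]
    exact Finset.sum_congr rfl fun ℓ _ => by ring
  rw [hS, hR, hderiv, hsplit]
  ring
end

section
/- Let I ⊆ ℝ be an open interval, let n ≥ 2 be an integer and c₀ ∈ ℝ. Let φ, R : I → ℝ be differentiable functions satisfying on all of I: (i) φ' = (n-1)c₀, (ii) R' = -2(n-1)c₀·φ, and (iii) 4(n-1)c₀·R - 2(n-1)c₀·φ² - φ·R' + 4(n-1)²c₀² = 0. If φ(s₁) ≠ 0 for some s₁ ∈ I, then c₀ = 0. -/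
/-- Let `I = (a, b) ⊆ ℝ` be an open interval, `n ≥ 2` an integer and `c₀ ∈ ℝ`.
Let `φ, R : I → ℝ` be differentiable functions satisfying on all of `I`:
(i) `φ' = (n-1)c₀`, (ii) `R' = -2(n-1)c₀·φ`, and
(iii) `4(n-1)c₀·R - 2(n-1)c₀·φ² - φ·R' + 4(n-1)²c₀² = 0`.
If `φ(s₁) ≠ 0` for some `s₁ ∈ I`, then `c₀ = 0`. -/
theorem stmt_5 (a b : ℝ) (n : ℕ) (hn : 2 ≤ n) (c₀ : ℝ)
    (φ R R' : ℝ → ℝ)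
    (hφdiff : ∀ s ∈ Set.Ioo a b, HasDerivAt φ (((n : ℝ) - 1) * c₀) s)
    (hRdiff : ∀ s ∈ Set.Ioo a b, HasDerivAt R (R' s) s)
    (h2 : ∀ s ∈ Set.Ioo a b, R' s = -2 * ((n : ℝ) - 1) * c₀ * φ s)
    (h3 : ∀ s ∈ Set.Ioo a b,
      4 * ((n : ℝ) - 1) * c₀ * R s - 2 * ((n : ℝ) - 1) * c₀ * (φ s) ^ 2
        - φ s * R' s + 4 * ((n : ℝ) - 1) ^ 2 * c₀ ^ 2 = 0)
    (s₁ : ℝ) (hs₁ : s₁ ∈ Set.Ioo a b) (hφs₁ : φ s₁ ≠ 0) :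
    c₀ = 0 := by
  by_contra hc₀
  have hn1 : (n : ℝ) - 1 ≠ 0 := by
    have : (2:ℝ) ≤ (n:ℝ) := by exact_mod_cast hn
    linarith
  -- From (ii) and (iii): R is constant equal to -(n-1)c₀ on the interval
  have hRconst : ∀ s ∈ Set.Ioo a b, R s = -((n : ℝ) - 1) * c₀ := by
    intro s hs
    have h := h3 s hs
    rw [h2 s hs] at h
    have key : 4 * ((n : ℝ) - 1) * c₀ * (R s + ((n : ℝ) - 1) * c₀) = 0 := by ring_nf; ring_nf at h; linarith
    have := mul_eq_zero.mp key
    rcases this with h' | h'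
    · exfalso
      have : (4:ℝ) * ((n : ℝ) - 1) * c₀ ≠ 0 := by
        intro hz
        rcases mul_eq_zero.mp hz with hz | hz
        · rcases mul_eq_zero.mp hz with hz | hz
          · norm_num at hz
          · exact hn1 hz
        · exact hc₀ hz
      exact this h'
    · linarith
  -- So R has derivative 0 at s₁
  have hconst0 : HasDerivAt R 0 s₁ := by
    have : HasDerivAt (fun _ : ℝ => -((n : ℝ) - 1) * c₀) 0 s₁ := hasDerivAt_const _ _
    apply this.congr_of_eventuallyEq
    have hmem : Set.Ioo a b ∈ nhds s₁ := (isOpen_Ioo).mem_nhds hs₁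
    filter_upwards [hmem] with x hx using hRconst x hx
  have huniq : R' s₁ = 0 := by
    have := (hRdiff s₁ hs₁).unique hconst0
    exact this
  rw [h2 s₁ hs₁] at huniq
  have : φ s₁ = 0 := by
    have h4 : (-2 : ℝ) * ((n : ℝ) - 1) * c₀ ≠ 0 := by
      intro hz
      rcases mul_eq_zero.mp hz with hz | hz
      · rcases mul_eq_zero.mp hz with hz | hz
        · norm_num at hz
        · exact hn1 hz
      · exact hc₀ hz
    exact (mul_eq_zero.mp huniq).resolve_left h4
  exact hφs₁ this
end
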